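/- arXiv:2310.10451 — 3 statements merged into one kernel-verified Lean document; each statement's English description precedes it below -/
import Mathlib

section
/- For the star-graph quantum walk with M ≥ 2 edges, one step of the walk preserves the symmetric subspace: if the state satisfies ψ⁺ i = α⁺ and ψ⁻ i = α⁻ for all i ≠ 0 (for some constants α⁺, α⁻ ∈ ℂ), then the state (ψ'⁺, ψ'⁻) obtained after applying one step U = S ∘ C ∘ O again satisfies that ψ'⁺ i is constant over i ≠ 0 and ψ'⁻ i is constant over i ≠ 0. -/
/-!
Star-graph quantum walk with `M` edges. The walker's state is a pair of vectors
`ψ⁺ ψ⁻ : Fin M → ℂ`; edge `0` is the marked edge. One step is `U = S ∘ C ∘ O` where: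
* the oracle `O` maps `(ψ⁺ 0, ψ⁻ 0)` to `(−ψ⁻ 0, −ψ⁺ 0)` and fixes all other entries;
* the coin `C` swaps `ψ⁺ i` and `ψ⁻ i` for every `i`;
* the scattering `S` replaces `ψ⁺` by `D_M · ψ⁺` where `D_M = (2/M) J_M − I_M`, and fixes `ψ⁻`.
-/

/-- One step `U = S ∘ C ∘ O` of the star-graph quantum walk with `M` edges. -/
noncomputable def starStep (M : ℕ) [NeZero M]
    (ψ : (Fin M → ℂ) × (Fin M → ℂ)) : (Fin M → ℂ) × (Fin M → ℂ) :=
  -- oracle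
  let Op : Fin M → ℂ := Function.update ψ.1 0 (-ψ.2 0)
  let Om : Fin M → ℂ := Function.update ψ.2 0 (-ψ.1 0)
  -- coin swaps the two components, then scattering applies `D_M` to the `+` component
  (fun i => ∑ j : Fin M, ((2 / (M : ℂ)) - if i = j then 1 else 0) * Om j, Op)

/-- One step of the star-graph walk preserves the symmetric subspace: if `ψ⁺` and `ψ⁻` are
constant away from the marked edge `0`, so is the state obtained after one step. -/
theorem starStep_preserves_symmetric_subspace
    (M : ℕ) [NeZero M] (hM : 2 ≤ M) (ψp ψm : Fin M → ℂ) (αp αm : ℂ)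
    (h : ∀ i : Fin M, i ≠ 0 → ψp i = αp ∧ ψm i = αm) :
    ∃ βp βm : ℂ, ∀ i : Fin M, i ≠ 0 →
      (starStep M (ψp, ψm)).1 i = βp ∧ (starStep M (ψp, ψm)).2 i = βm := by
  classical
  set Om : Fin M → ℂ := Function.update ψm 0 (-ψp 0) with hOm
  refine ⟨(2 / (M : ℂ)) * ∑ j, Om j - αm, αp, fun i hi => ?_⟩
  constructor
  · simp only [starStep]
    have : ∀ j : Fin M, ((2 / (M : ℂ)) - if i = j then 1 else 0) * Om j
        = (2 / (M : ℂ)) * Om j - (if i = j then Om j else 0) := by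
      intro j; by_cases hij : i = j <;> simp [hij] <;> ring
    rw [Finset.sum_congr rfl (fun j _ => this j), Finset.sum_sub_distrib,
      Finset.sum_ite_eq Finset.univ i Om]
    have hOmi : Om i = αm := by
      simp [hOm, Function.update_of_ne hi, (h i hi).2]
    simp [hOmi, Finset.mul_sum]
  · simp only [starStep]
    simp [Function.update_of_ne hi, (h i hi).1]
end

section
/- For the star-graph quantum walk with M ≥ 2 edges: if the state satisfies ψ⁺ i = α⁺ and ψ⁻ i = α⁻ for all i ≠ 0, then after one step U = S ∘ C ∘ O the new state (ψ'⁺, ψ'⁻) satisfies: ψ'⁺ i = ((M−2)·α⁻ − 2·ψ⁺ 0)/M and ψ'⁻ i = α⁺ for all i ≠ 0; ψ'⁺ 0 = ((2M−2)·α⁻ + (M−2)·ψ⁺ 0)/M; and ψ'⁻ 0 = −ψ⁻ 0. -/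
/-- Explicit formulas for one step of the star-graph walk on a symmetric state:
if `ψ⁺ i = α⁺` and `ψ⁻ i = α⁻` for all `i ≠ 0`, then after one step
`ψ'⁺ i = ((M−2)α⁻ − 2 ψ⁺ 0)/M` and `ψ'⁻ i = α⁺` for `i ≠ 0`,
`ψ'⁺ 0 = ((2M−2)α⁻ + (M−2) ψ⁺ 0)/M`, and `ψ'⁻ 0 = −ψ⁻ 0`. -/
theorem starStep_symmetric_formulas
    (M : ℕ) [NeZero M] (hM : 2 ≤ M) (ψp ψm : Fin M → ℂ) (αp αm : ℂ)
    (h : ∀ i : Fin M, i ≠ 0 → ψp i = αp ∧ ψm i = αm) :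
    (∀ i : Fin M, i ≠ 0 →
        (starStep M (ψp, ψm)).1 i = (((M : ℂ) - 2) * αm - 2 * ψp 0) / M ∧
        (starStep M (ψp, ψm)).2 i = αp) ∧
      (starStep M (ψp, ψm)).1 0 = ((2 * (M : ℂ) - 2) * αm + ((M : ℂ) - 2) * ψp 0) / M ∧
      (starStep M (ψp, ψm)).2 0 = -ψm 0 := by
  have hM0 : (M : ℂ) ≠ 0 := Nat.cast_ne_zero.mpr (NeZero.ne M)
  set Om : Fin M → ℂ := Function.update ψm 0 (-ψp 0) with hOm
  have hS : ∑ j : Fin M, Om j = ((M : ℂ) - 1) * αm - ψp 0 := by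
    rw [hOm, Finset.sum_update_of_mem (Finset.mem_univ 0)]
    rw [Finset.sum_congr rfl
      (fun j hj => (h j (by simpa using (Finset.mem_sdiff.mp hj).2)).2)]
    rw [Finset.sum_const]
    have hcard : (Finset.univ \ {(0 : Fin M)}).card = M - 1 := by
      rw [Finset.card_sdiff_of_subset (by simp), Finset.card_univ, Fintype.card_fin, Finset.card_singleton]
    rw [hcard]
    have : ((M - 1 : ℕ) : ℂ) = (M : ℂ) - 1 := by
      push_cast [Nat.cast_sub (le_trans one_le_two hM)]; ring
    rw [nsmul_eq_mul, this]; ring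
  have key : ∀ i : Fin M,
      (∑ j : Fin M, ((2 / (M : ℂ)) - if i = j then 1 else 0) * Om j)
        = (2 / (M : ℂ)) * (((M : ℂ) - 1) * αm - ψp 0) - Om i := by
    intro i
    simp only [sub_mul, Finset.sum_sub_distrib, ← Finset.mul_sum, hS, ite_mul, one_mul,
      zero_mul, Finset.sum_ite_eq, Finset.mem_univ, if_true]
  refine ⟨fun i hi => ⟨?_, ?_⟩, ?_, ?_⟩
  · show (∑ j : Fin M, _) = _
    rw [key i]
    rw [hOm, Function.update_of_ne hi, (h i hi).2]
    field_simp; ring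
  · show Function.update ψp 0 (-ψm 0) i = αp
    rw [Function.update_of_ne hi]; exact (h i hi).1
  · show (∑ j : Fin M, _) = _
    rw [key 0, hOm, Function.update_self]
    field_simp; ring
  · show Function.update ψp 0 (-ψm 0) 0 = -ψm 0
    rw [Function.update_self]
end

section
/- For the star-graph quantum walk with M ≥ 2 edges started in the diagonal initial state, the full dynamics reduces to the 3-dimensional linear system: for every t ∈ ℕ, the state (ψ⁺(t), ψ⁻(t)) = U^t (diagonal state) satisfies ψ⁺ i (t) = (A^t X₀)₁ and ψ⁻ i (t) = (A^t X₀)₂ for every i ≠ 0, and ψ⁺ 0 (t) = (A^t X₀)₃. -/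
noncomputable def starInit (M : ℕ) : (Fin M → ℂ) × (Fin M → ℂ) :=
  (fun _ => ((1 / Real.sqrt (2 * M) : ℝ) : ℂ), fun _ => ((1 / Real.sqrt (2 * M) : ℝ) : ℂ))

noncomputable def starA (M : ℕ) : Matrix (Fin 3) (Fin 3) ℂ :=
  !![0, ((M : ℂ) - 2) / M, -2 / M;
     1, 0, 0;
     0, 2 * ((M : ℂ) - 1) / M, ((M : ℂ) - 2) / M]

noncomputable def starX0 (M : ℕ) : Fin 3 → ℂ :=
  fun _ => ((1 / Real.sqrt (2 * M) : ℝ) : ℂ)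

/-- The star-graph walk started in the diagonal state reduces to the 3-dimensional linear
system `X_{t+1} = A X_t`: at every time `t`, the common value of `ψ⁺` away from the marked
edge is `(A^t X₀)₁`, the common value of `ψ⁻` away from the marked edge is `(A^t X₀)₂`, and
the marked-edge amplitude `ψ⁺ 0` is `(A^t X₀)₃`. -/
theorem starWalk_reduces_to_linear_system (M : ℕ) [NeZero M] (hM : 2 ≤ M) (t : ℕ) :
    (∀ i : Fin M, i ≠ 0 →
        ((starStep M)^[t] (starInit M)).1 i = ((starA M ^ t).mulVec (starX0 M)) 0 ∧
        ((starStep M)^[t] (starInit M)).2 i = ((starA M ^ t).mulVec (starX0 M)) 1) ∧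
      ((starStep M)^[t] (starInit M)).1 0 = ((starA M ^ t).mulVec (starX0 M)) 2 := by
  have hMC : (M : ℂ) ≠ 0 := Nat.cast_ne_zero.mpr (NeZero.ne M)
  set r : ℂ := ((1 / Real.sqrt (2 * M) : ℝ) : ℂ) with hr
  suffices h : ((∀ i : Fin M, i ≠ 0 →
        ((starStep M)^[t] (starInit M)).1 i = ((starA M ^ t).mulVec (starX0 M)) 0 ∧
        ((starStep M)^[t] (starInit M)).2 i = ((starA M ^ t).mulVec (starX0 M)) 1) ∧
      ((starStep M)^[t] (starInit M)).1 0 = ((starA M ^ t).mulVec (starX0 M)) 2) ∧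
      ((starStep M)^[t] (starInit M)).2 0 = (-1) ^ t * r by
    exact h.1
  induction t with
  | zero =>
    simp [starInit, starX0, Matrix.mulVec, dotProduct, Fin.sum_univ_three, hr]
  | succ t ih =>
    obtain ⟨⟨hoff, h0⟩, hm0⟩ := ih
    set ψ := (starStep M)^[t] (starInit M) with hψ
    set X := (starA M ^ t).mulVec (starX0 M) with hX
    have hnext : ∀ k, ((starA M ^ (t+1)).mulVec (starX0 M)) k
        = ((starA M).mulVec X) k := by
      intro k
      rw [pow_succ', Matrix.mulVec_mulVec]
    have hA0 : ((starA M).mulVec X) 0 = ((M : ℂ) - 2) / M * X 1 + (-2 / M) * X 2 := by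
      simp [starA, Matrix.mulVec, dotProduct, Fin.sum_univ_three]
    have hA1 : ((starA M).mulVec X) 1 = X 0 := by
      simp [starA, Matrix.mulVec, dotProduct, Fin.sum_univ_three]
    have hA2 : ((starA M).mulVec X) 2 = 2 * ((M : ℂ) - 1) / M * X 1 + ((M : ℂ) - 2) / M * X 2 := by
      simp [starA, Matrix.mulVec, dotProduct, Fin.sum_univ_three]
    have hstep : (starStep M)^[t+1] (starInit M) = starStep M ψ :=
      Function.iterate_succ_apply' _ _ _
    have hOm : ∀ j : Fin M, Function.update ψ.2 0 (-ψ.1 0) j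
        = if j = 0 then -X 2 else X 1 := by
      intro j
      by_cases hj : j = 0
      · rw [hj, Function.update_self, h0]; simp
      · rw [Function.update_of_ne hj, (hoff j hj).2, if_neg hj]
    have hsumOm : ∑ j : Fin M, Function.update ψ.2 0 (-ψ.1 0) j
        = -X 2 + ((M : ℂ) - 1) * X 1 := by
      simp only [hOm]
      have : ∀ j : Fin M, (if j = 0 then -X 2 else X 1)
          = (if j = 0 then -X 2 - X 1 else 0) + X 1 := by
        intro j; by_cases hj : j = 0 <;> simp [hj]
      simp only [this, Finset.sum_add_distrib, Finset.sum_ite_eq' Finset.univ (0 : Fin M),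
        Finset.mem_univ, if_true, Finset.sum_const, Finset.card_univ, Fintype.card_fin,
        nsmul_eq_mul]
      ring
    have hmain : ∀ i : Fin M,
        (∑ j : Fin M, ((2 / (M : ℂ)) - if i = j then 1 else 0)
          * Function.update ψ.2 0 (-ψ.1 0) j)
        = (2 / (M : ℂ)) * (-X 2 + ((M : ℂ) - 1) * X 1)
          - (if i = 0 then -X 2 else X 1) := by
      intro i
      have : (∑ j : Fin M, ((2 / (M : ℂ)) - if i = j then 1 else 0)
            * Function.update ψ.2 0 (-ψ.1 0) j)
          = (∑ j : Fin M, (2 / (M : ℂ)) * Function.update ψ.2 0 (-ψ.1 0) j)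
            - ∑ j : Fin M, (if i = j then Function.update ψ.2 0 (-ψ.1 0) j else 0) := by
        rw [← Finset.sum_sub_distrib]
        congr 1; ext j
        by_cases hij : i = j <;> simp [hij] <;> ring
      rw [this, ← Finset.mul_sum, hsumOm, Finset.sum_ite_eq Finset.univ i, if_pos (Finset.mem_univ i), hOm i]
    constructor
    constructor
    · intro i hi
      rw [hstep]
      constructor
      · show (∑ j : Fin M, ((2 / (M : ℂ)) - if i = j then 1 else 0)
          * Function.update ψ.2 0 (-ψ.1 0) j) = _
        rw [hmain i, hnext 0, hA0, if_neg hi]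
        field_simp
        ring
      · show Function.update ψ.1 0 (-ψ.2 0) i = _
        rw [Function.update_of_ne hi, hnext 1, hA1, (hoff i hi).1]
    · rw [hstep]
      show (∑ j : Fin M, ((2 / (M : ℂ)) - if (0:Fin M) = j then 1 else 0)
          * Function.update ψ.2 0 (-ψ.1 0) j) = _
      rw [hmain 0, hnext 2, hA2, if_pos rfl]
      field_simp
      ring
    · rw [hstep]
      show Function.update ψ.1 0 (-ψ.2 0) 0 = _
      rw [Function.update_self, hm0, pow_succ]
      ring
end
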